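/- Let O be an occurrence net, σ a run of O (viewed as a safe Petri net with initial marking C0), and 𝒞 the set of events occurring in σ. Then 𝒞 is a configuration of O, and σ is fair if and only if 𝒞 is a maximal configuration of O. -/

import Mathlib

open scoped Classical

/-- A Petri net over places `P` and transitions `T`, with markings as functions `P → ℕ`
and the flow relation given by presets and postsets of transitions. -/
structure PetriNet (P : Type*) (T : Type*) where
  /-- `pre t p` means `p ∈ •t`, i.e. `(p,t)` is in the flow relation. -/
  pre : T → P → Prop
  /-- `post t p` means `p ∈ t•`, i.e. `(t,p)` is in the flow relation. -/
  post : T → P → Prop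
  /-- the initial marking -/
  M0 : P → ℕ

namespace PetriNet

variable {P : Type*} {T : Type*}

/-- A transition is enabled at a marking if every place of its preset is marked. -/
def enabled (N : PetriNet P T) (M : P → ℕ) (t : T) : Prop :=
  ∀ p, N.pre t p → 1 ≤ M p

/-- Firing a transition consumes a token from each place of the preset and
produces a token on each place of the postset. -/
noncomputable def fire (N : PetriNet P T) (M : P → ℕ) (t : T) : P → ℕ :=
  fun p => M p - (if N.pre t p then 1 else 0) + (if N.post t p then 1 else 0)

/-- `FireSeq N M l M'` : the finite sequence `l` of transitions can be fired from `M`,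
leading to `M'`. -/
inductive FireSeq (N : PetriNet P T) : (P → ℕ) → List T → (P → ℕ) → Prop
  | nil (M : P → ℕ) : FireSeq N M [] M
  | cons {M M' : P → ℕ} {t : T} {l : List T} :
      N.enabled M t → FireSeq N (N.fire M t) l M' → FireSeq N M (t :: l) M'

/-- A marking is reachable if some finite firing sequence from `M0` reaches it. -/
def Reachable (N : PetriNet P T) (M : P → ℕ) : Prop :=
  ∃ l : List T, FireSeq N N.M0 l M

/-- A net is safe if no reachable marking puts more than one token into any place. -/
def Safe (N : PetriNet P T) : Prop :=
  ∀ M, N.Reachable M → ∀ p, M p ≤ 1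

/-- A (finite or infinite) run of a Petri net: a firing sequence from the initial
marking.  `len = ⊤` means the run is infinite; for finite runs only the indices
`i < len` carry transitions. -/
structure Run (N : PetriNet P T) where
  /-- length of the run (`⊤` = infinite) -/
  len : ℕ∞
  /-- the transition fired at step `i` (meaningful for `i < len`) -/
  seq : ℕ → T
  /-- the marking before step `i` -/
  marks : ℕ → (P → ℕ)
  init : marks 0 = N.M0
  enabled_step : ∀ i : ℕ, (i : ℕ∞) < len → N.enabled (marks i) (seq i)
  fire_step : ∀ i : ℕ, (i : ℕ∞) < len → marks (i + 1) = N.fire (marks i) (seq i)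

/-- A transition occurs in a run if it is fired at some step of the run. -/
def Run.occurs {N : PetriNet P T} (σ : N.Run) (t : T) : Prop :=
  ∃ i : ℕ, (i : ℕ∞) < σ.len ∧ σ.seq i = t

/-- A run is fair iff it is finite and ends in a marking enabling no transition, or
it is infinite and no transition remains enabled from some point on while being
fired only finitely often thereafter. -/
def Run.Fair {N : PetriNet P T} (σ : N.Run) : Prop :=
  (∃ n : ℕ, σ.len = (n : ℕ∞) ∧ ∀ t, ¬ N.enabled (σ.marks n) t) ∨
  (σ.len = ⊤ ∧ ¬ ∃ (t : T) (i : ℕ),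
      (∀ k, i ≤ k → N.enabled (σ.marks k) t) ∧ (∀ k, i ≤ k → σ.seq k ≠ t))

section OccurrenceNet

variable {C : Type*} {E : Type*}

/-- The flow relation, as a relation on nodes (conditions `C` and events `E`). -/
def flow (O : PetriNet C E) : (C ⊕ E) → (C ⊕ E) → Prop
  | Sum.inl c, Sum.inr e => O.pre e c
  | Sum.inr e, Sum.inl c => O.post e c
  | _, _ => False

/-- Causality `<` on nodes: the transitive closure of the flow relation. -/
def nlt (O : PetriNet C E) : (C ⊕ E) → (C ⊕ E) → Prop :=
  Relation.TransGen O.flow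

/-- `≤` on nodes: the reflexive-transitive closure of the flow relation. -/
def nle (O : PetriNet C E) : (C ⊕ E) → (C ⊕ E) → Prop :=
  Relation.ReflTransGen O.flow

/-- Conflict `x # x'` between two nodes. -/
def Conflict (O : PetriNet C E) (x x' : C ⊕ E) : Prop :=
  ∃ e e' : E, e ≠ e' ∧ (∃ c : C, O.pre e c ∧ O.pre e' c) ∧
    O.nle (Sum.inr e) x ∧ O.nle (Sum.inr e') x'

/-- Causality `<` restricted to events. -/
def elt (O : PetriNet C E) (e e' : E) : Prop :=
  O.nlt (Sum.inr e) (Sum.inr e')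

/-- `≤` restricted to events. -/
def ele (O : PetriNet C E) (e e' : E) : Prop :=
  e = e' ∨ O.elt e e'

/-- Conflict restricted to events. -/
def econflict (O : PetriNet C E) (e e' : E) : Prop :=
  O.Conflict (Sum.inr e) (Sum.inr e')

/-- The cone `⌈e⌉` of an event: all events `e' ≤ e`. -/
def cone (O : PetriNet C E) (e : E) : Set E :=
  {e' | O.ele e' e}

/-- `O` is an occurrence net. -/
structure IsOccurrenceNet (O : PetriNet C E) : Prop where
  /-- no self-conflict -/
  no_self_conflict : ∀ x : C ⊕ E, ¬ O.Conflict x x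
  /-- `<` is acyclic -/
  acyclic : ∀ x : C ⊕ E, ¬ O.nlt x x
  /-- all cones are finite -/
  finite_cones : ∀ e : E, (O.cone e).Finite
  /-- no backward branching: `|•c| ≤ 1` -/
  no_backward_branching : ∀ (c : C) (e e' : E), O.post e c → O.post e' c → e = e'
  /-- the initial marking `C0` is exactly the set of `≤`-minimal conditions -/
  init_minimal : ∀ c : C, O.M0 c = (if ∀ e : E, ¬ O.post e c then 1 else 0)
  /-- no event is `≤`-minimal (the minimal nodes are conditions) -/
  events_not_minimal : ∀ e : E, ∃ c : C, O.pre e c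

/-- A configuration: a downward-closed, conflict-free set of events. -/
def IsConfiguration (O : PetriNet C E) (𝒞 : Set E) : Prop :=
  (∀ e ∈ 𝒞, ∀ e' : E, O.elt e' e → e' ∈ 𝒞) ∧
  (∀ e ∈ 𝒞, ∀ e' ∈ 𝒞, ¬ O.econflict e e')

/-- The cut of a configuration: `(C0 ∪ 𝒞•) \ •𝒞`. -/
def Cut (O : PetriNet C E) (𝒞 : Set E) : Set C :=
  {c | (1 ≤ O.M0 c ∨ ∃ e ∈ 𝒞, O.post e c) ∧ ¬ ∃ e ∈ 𝒞, O.pre e c}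

/-- A maximal configuration (w.r.t. set inclusion). -/
def MaximalConfiguration (O : PetriNet C E) (𝒞 : Set E) : Prop :=
  O.IsConfiguration 𝒞 ∧ ∀ 𝒟 : Set E, O.IsConfiguration 𝒟 → 𝒞 ⊆ 𝒟 → 𝒟 = 𝒞

/-- `e` reveals `e'` (`e ▷ e'`): every fair run containing `e` also contains `e'`. -/
def Reveals (O : PetriNet C E) (e e' : E) : Prop :=
  ∀ σ : O.Run, σ.Fair → σ.occurs e → σ.occurs e'

/-- Direct causal predecessor relation among events: `e ∈ •(•e')`. -/
def dpred (O : PetriNet C E) (e e' : E) : Prop :=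
  ∃ c : C, O.post e c ∧ O.pre e' c

/-- The height `H(e) = 1 + max { H(e') : e' ∈ •(•e) }` (with `max ∅ = 0`), expressed
as the maximal number of events on a chain of direct causal predecessors ending in `e`. -/
noncomputable def height (O : PetriNet C E) (e : E) : ℕ :=
  sSup {n : ℕ | 1 ≤ n ∧ ∃ f : ℕ → E, f (n - 1) = e ∧
    ∀ i : ℕ, i + 1 < n → O.dpred (f i) (f (i + 1))}

/-- The height of a prefix, given by its set of events: the maximal height of an event. -/
noncomputable def prefixHeight (O : PetriNet C E) (Es : Set E) : ℕ :=
  sSup (O.height '' Es)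

/-- Two conditions are concurrent iff some configuration has both in its cut. -/
def concurrentC (O : PetriNet C E) (c c' : C) : Prop :=
  ∃ 𝒞 : Set E, O.IsConfiguration 𝒞 ∧ c ∈ O.Cut 𝒞 ∧ c' ∈ O.Cut 𝒞

/-- A co-set: a set of pairwise concurrent conditions. -/
def CoSet (O : PetriNet C E) (D : Set C) : Prop :=
  ∀ c ∈ D, ∀ c' ∈ D, c ≠ c' → O.concurrentC c c'

end OccurrenceNet

end PetriNet

/-- An unfolding of the safe Petri net `N`: an occurrence net (with conditions `C` and
events `E`) together with a folding map (given by `fC` on conditions and `fE` on events)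
satisfying the usual properties. -/
structure Unfolding {P T : Type*} (C E : Type*) (N : PetriNet P T) where
  /-- the underlying occurrence net -/
  net : PetriNet C E
  occ : net.IsOccurrenceNet
  /-- the folding map on conditions -/
  fC : C → P
  /-- the folding map on events -/
  fE : E → T
  /-- `f` restricts to a bijection from `C0` to `M0` -/
  init_maps : ∀ c, 1 ≤ net.M0 c → 1 ≤ N.M0 (fC c)
  init_inj : ∀ c c', 1 ≤ net.M0 c → 1 ≤ net.M0 c' → fC c = fC c' → c = c'
  init_surj : ∀ p, 1 ≤ N.M0 p → ∃ c, 1 ≤ net.M0 c ∧ fC c = p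
  /-- for every co-set `D` and transition `t` such that `f` is a bijection from `D`
  to `•t`, there is exactly one event `e` with `f e = t` and `•e = D` -/
  coset_event : ∀ (D : Set C) (t : T), net.CoSet D →
      (∀ c ∈ D, N.pre t (fC c)) → Set.InjOn fC D →
      (∀ p, N.pre t p → ∃ c ∈ D, fC c = p) →
      ∃! e : E, fE e = t ∧ ∀ c, net.pre e c ↔ c ∈ D
  /-- `f` restricts to a bijection from `•e` to `•(f e)` -/
  pre_maps : ∀ e c, net.pre e c → N.pre (fE e) (fC c)
  pre_inj : ∀ e c c', net.pre e c → net.pre e c' → fC c = fC c' → c = c'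
  pre_surj : ∀ e p, N.pre (fE e) p → ∃ c, net.pre e c ∧ fC c = p
  /-- `f` restricts to a bijection from `e•` to `(f e)•` -/
  post_maps : ∀ e c, net.post e c → N.post (fE e) (fC c)
  post_inj : ∀ e c c', net.post e c → net.post e c' → fC c = fC c' → c = c'
  post_surj : ∀ e p, N.post (fE e) p → ∃ c, net.post e c ∧ fC c = p

namespace Unfolding

variable {P T C E : Type*} {N : PetriNet P T}

/-- The marking (as a set of places) associated with a configuration:
`Mark(𝒞) = f(Cut(𝒞))`. -/
def Mark (V : Unfolding C E N) (𝒞 : Set E) : Set P :=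
  V.fC '' V.net.Cut 𝒞

/-- The marking associated with a configuration, as a function `P → ℕ`. -/
noncomputable def MarkFun (V : Unfolding C E N) (𝒞 : Set E) : P → ℕ :=
  (V.Mark 𝒞).indicator fun _ => 1

/-- `M_e := Mark(⌈e⌉)`. -/
def Me (V : Unfolding C E N) (e : E) : Set P :=
  V.Mark (V.net.cone e)

/-- The level-`i` cutoffs `L_i` (with `L_0 = ∅`):
`e ∈ L_1` iff `M_e = M_0` or some `e' < e` has `M_{e'} = M_e`;
for `i > 1`, `e ∈ L_i` iff some `e' ∈ L_{i-1}` has `e' < e` and `M_{e'} = M_e`. -/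
def levelCut (V : Unfolding C E N) : ℕ → Set E
  | 0 => ∅
  | 1 => {e | V.Me e = {p | 1 ≤ N.M0 p} ∨ ∃ e', V.net.elt e' e ∧ V.Me e' = V.Me e}
  | (i + 2) => {e | ∃ e' ∈ V.levelCut (i + 1), V.net.elt e' e ∧ V.Me e' = V.Me e}

/-- The events of the level-`i` prefix `U_i`: the downward closure of the
`≤`-minimal events of `L_i`. -/
def levelEvents (V : Unfolding C E N) (i : ℕ) : Set E :=
  {e | ∃ e', (e' ∈ V.levelCut i ∧ ∀ e'' ∈ V.levelCut i, ¬ V.net.elt e'' e') ∧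
    V.net.ele e e'}

end Unfolding
namespace PetriNet

section Aux

variable {C E : Type*} {O : PetriNet C E}

/-- number of steps `< m` producing a token on `c` -/
noncomputable def prodCnt (σ : O.Run) (c : C) (m : ℕ) : ℕ :=
  ((Finset.range m).filter (fun k => O.post (σ.seq k) c)).card

/-- number of steps `< m` consuming a token from `c` -/
noncomputable def consCnt (σ : O.Run) (c : C) (m : ℕ) : ℕ :=
  ((Finset.range m).filter (fun k => O.pre (σ.seq k) c)).card

lemma marks_eq (σ : O.Run) : ∀ m : ℕ, (m : ℕ∞) ≤ σ.len → ∀ c,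
    σ.marks m c + consCnt σ c m = O.M0 c + prodCnt σ c m := by
  intro m
  induction m with
  | zero => intro _ c; simp [prodCnt, consCnt, σ.init]
  | succ m ih =>
    intro h c
    have hm : (m : ℕ∞) < σ.len :=
      lt_of_lt_of_le (by exact_mod_cast Nat.lt_succ_self m) h
    have := ih hm.le c
    have hfire := σ.fire_step m hm
    have hen := σ.enabled_step m hm
    have hcp : prodCnt σ c (m+1)
        = prodCnt σ c m + (if O.post (σ.seq m) c then 1 else 0) := by
      unfold prodCnt
      rw [Finset.range_add_one, Finset.filter_insert]
      split <;> simp [Finset.card_insert_of_notMem]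
    have hcc : consCnt σ c (m+1)
        = consCnt σ c m + (if O.pre (σ.seq m) c then 1 else 0) := by
      unfold consCnt
      rw [Finset.range_add_one, Finset.filter_insert]
      split <;> simp [Finset.card_insert_of_notMem]
    rw [hfire, hcp, hcc]
    unfold fire
    by_cases hp : O.pre (σ.seq m) c
    · have h1 : 1 ≤ σ.marks m c := hen c hp
      by_cases hq : O.post (σ.seq m) c <;> simp only [hp, hq, if_true, if_false] <;> omega
    · by_cases hq : O.post (σ.seq m) c <;> simp only [hp, hq, if_true, if_false] <;> omega

lemma fired_step_of_marked (hO : O.IsOccurrenceNet) (σ : O.Run) {m : ℕ} {c : C} {e'' : E}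
    (hm : (m : ℕ∞) ≤ σ.len) (hmark : 1 ≤ σ.marks m c) (hpost : O.post e'' c) :
    ∃ k, k < m ∧ (k : ℕ∞) < σ.len ∧ σ.seq k = e'' := by
  have hM := marks_eq σ m hm c
  have hM0 : O.M0 c = 0 := by
    rw [hO.init_minimal, if_neg]; push_neg; exact ⟨e'', hpost⟩
  have hprod : 1 ≤ prodCnt σ c m := by omega
  obtain ⟨k, hk⟩ := Finset.card_pos.mp (lt_of_lt_of_le one_pos hprod)
  rw [Finset.mem_filter, Finset.mem_range] at hk
  refine ⟨k, hk.1, lt_of_lt_of_le (by exact_mod_cast hk.1) hm,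
    hO.no_backward_branching c _ _ hk.2 hpost⟩

lemma elt_of_dpred {f e : E} (h : O.dpred f e) : O.elt f e := by
  obtain ⟨c, hfc, hec⟩ := h
  exact Relation.TransGen.head (show O.flow (Sum.inr f) (Sum.inl c) from hfc)
    (Relation.TransGen.single (show O.flow (Sum.inl c) (Sum.inr e) from hec))

lemma elt_irrefl (hO : O.IsOccurrenceNet) (e : E) : ¬ O.elt e e := hO.acyclic _

lemma elt_trans {a b c : E} (h1 : O.elt a b) (h2 : O.elt b c) : O.elt a c :=
  Relation.TransGen.trans h1 h2

lemma mem_cone_self (e : E) : e ∈ O.cone e := Or.inl rfl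

lemma cone_card_lt (hO : O.IsOccurrenceNet) {f e : E} (h : O.elt f e) :
    (hO.finite_cones f).toFinset.card < (hO.finite_cones e).toFinset.card := by
  apply Finset.card_lt_card
  rw [Finset.ssubset_iff_of_subset]
  · refine ⟨e, ?_, ?_⟩
    · simp only [Set.Finite.mem_toFinset]; exact mem_cone_self e
    · simp only [Set.Finite.mem_toFinset]
      rintro (rfl | hlt)
      · exact hO.acyclic _ h
      · exact hO.acyclic _ (elt_trans hlt h)
  · intro x hx
    simp only [Set.Finite.mem_toFinset] at *
    rcases hx with rfl | hlt
    · exact Or.inr h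
    · exact Or.inr (elt_trans hlt h)

lemma fires_once (hO : O.IsOccurrenceNet) (σ : O.Run) :
    ∀ (n : ℕ) (e : E), (hO.finite_cones e).toFinset.card ≤ n →
    ∀ k k', k < k' → ((k' : ℕ) : ℕ∞) < σ.len → σ.seq k = e → σ.seq k' = e → False := by
  intro n
  induction n with
  | zero =>
    intro e hcard _ _ _ _ _ _
    have : e ∈ (hO.finite_cones e).toFinset := by
      simp only [Set.Finite.mem_toFinset]; exact mem_cone_self e
    have := Finset.card_pos.mpr ⟨e, this⟩
    omega
  | succ n ih =>
    intro e hcard k k' hkk' hk' hsk hsk'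
    have hen := σ.enabled_step k' hk'
    rw [hsk'] at hen
    obtain ⟨c, hc⟩ := hO.events_not_minimal e
    have hmark : 1 ≤ σ.marks k' c := hen c hc
    have hM := marks_eq σ k' hk'.le c
    have hcons : 1 ≤ consCnt σ c k' := by
      apply Finset.card_pos.mpr
      exact ⟨k, by simp [Finset.mem_filter, Finset.mem_range, hkk', hsk, hc]⟩
    by_cases hpe : ∃ f, O.post f c
    · obtain ⟨f, hf⟩ := hpe
      have hM0 : O.M0 c = 0 := by
        rw [hO.init_minimal, if_neg]; push_neg; exact ⟨f, hf⟩
      have hprod : 1 < prodCnt σ c k' := by omega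
      obtain ⟨j, hj, j', hj', hjj'⟩ := Finset.one_lt_card.mp hprod
      rw [Finset.mem_filter, Finset.mem_range] at hj hj'
      have hje : σ.seq j = σ.seq j' := hO.no_backward_branching c _ _ hj.2 hj'.2
      have hdp : O.dpred (σ.seq j) e := ⟨c, hj.2, hc⟩
      have hlt : O.elt (σ.seq j) e := elt_of_dpred hdp
      have hcard' : (hO.finite_cones (σ.seq j)).toFinset.card ≤ n := by
        have := cone_card_lt hO hlt; omega
      rcases lt_trichotomy j j' with h | h | h
      · exact ih (σ.seq j) hcard' j j' h
          (lt_of_lt_of_le (by exact_mod_cast hj'.1) hk'.le) rfl hje.symm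
      · exact hjj' h
      · exact ih (σ.seq j) hcard' j' j h
          (lt_of_lt_of_le (by exact_mod_cast hj.1) hk'.le) hje.symm rfl
    · push_neg at hpe
      have hM0 : O.M0 c = 1 := by rw [hO.init_minimal, if_pos hpe]
      have hprod : prodCnt σ c k' = 0 := by
        apply Finset.card_eq_zero.mpr
        apply Finset.filter_eq_empty_iff.mpr
        intro j _ hj; exact hpe _ hj
      omega

lemma no_refill (hO : O.IsOccurrenceNet) (σ : O.Run) {m k : ℕ} {c : C}
    (hm : (m : ℕ∞) ≤ σ.len) (hmark : 1 ≤ σ.marks m c)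
    (hk : k < m) (hpre : O.pre (σ.seq k) c) : False := by
  have hM := marks_eq σ m hm c
  have hcons : 1 ≤ consCnt σ c m := by
    apply Finset.card_pos.mpr
    exact ⟨k, by simp [Finset.mem_filter, Finset.mem_range, hk, hpre]⟩
  by_cases hpe : ∃ f, O.post f c
  · obtain ⟨f, hf⟩ := hpe
    have hM0 : O.M0 c = 0 := by
      rw [hO.init_minimal, if_neg]; push_neg; exact ⟨f, hf⟩
    have hprod : 1 < prodCnt σ c m := by omega
    obtain ⟨j, hj, j', hj', hjj'⟩ := Finset.one_lt_card.mp hprod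
    rw [Finset.mem_filter, Finset.mem_range] at hj hj'
    have hje : σ.seq j = σ.seq j' := hO.no_backward_branching c _ _ hj.2 hj'.2
    rcases lt_trichotomy j j' with h | h | h
    · exact fires_once hO σ _ (σ.seq j) le_rfl j j' h
        (lt_of_lt_of_le (by exact_mod_cast hj'.1) hm) rfl hje.symm
    · exact hjj' h
    · exact fires_once hO σ _ (σ.seq j) le_rfl j' j h
        (lt_of_lt_of_le (by exact_mod_cast hj.1) hm) hje.symm rfl
  · push_neg at hpe
    have hM0 : O.M0 c = 1 := by rw [hO.init_minimal, if_pos hpe]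
    have hprod : prodCnt σ c m = 0 := by
      apply Finset.card_eq_zero.mpr
      apply Finset.filter_eq_empty_iff.mpr
      intro j _ hj; exact hpe _ hj
    omega

end Aux

end PetriNet
namespace PetriNet

section Aux2

variable {C E : Type*} {O : PetriNet C E}

lemma rtg_cases {α} {r : α → α → Prop} {a b : α} (h : Relation.ReflTransGen r a b) :
    a = b ∨ Relation.TransGen r a b := by
  rcases h.cases_head with h | ⟨c, hac, hcb⟩
  · exact Or.inl h
  · exact Or.inr (Relation.TransGen.head' hac hcb)

lemma transGen_dpred_of_elt {e e' : E} (h : O.elt e e') : Relation.TransGen O.dpred e e' := by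
  suffices H : ∀ y : C ⊕ E, O.nlt (Sum.inr e) y →
      (∀ e'', y = Sum.inr e'' → Relation.TransGen O.dpred e e'') ∧
      (∀ c, y = Sum.inl c → ∃ f, Relation.ReflTransGen O.dpred e f ∧ O.post f c) by
    exact (H _ h).1 e' rfl
  intro y h
  induction h with
  | @single y h =>
    rcases y with c | e2
    · exact ⟨fun e'' heq => by simp at heq, fun c' heq => by
        cases heq; exact ⟨e, Relation.ReflTransGen.refl, h⟩⟩
    · exact absurd h (by simp [flow])
  | @tail b y hxb hby ih =>
    rcases b with c | e2 <;> rcases y with c' | e3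
    · exact absurd hby (by simp [flow])
    · obtain ⟨f, hrt, hpost⟩ := ih.2 c rfl
      have hstep : O.dpred f e3 := ⟨c, hpost, hby⟩
      exact ⟨fun e'' heq => by cases heq; exact Relation.TransGen.tail' hrt hstep,
        fun c' heq => by simp at heq⟩
    · have htg := ih.1 e2 rfl
      exact ⟨fun e'' heq => by simp at heq,
        fun c'' heq => by cases heq; exact ⟨e2, htg.to_reflTransGen, hby⟩⟩
    · exact absurd hby (by simp [flow])

lemma elt_of_transGen_dpred {e e' : E} (h : Relation.TransGen O.dpred e e') : O.elt e e' := by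
  induction h with
  | single h => exact elt_of_dpred h
  | tail _ h ih => exact elt_trans ih (elt_of_dpred h)

lemma nle_inr_inr {f x : E} (h : O.nle (Sum.inr f) (Sum.inr x)) : f = x ∨ O.elt f x := by
  rcases rtg_cases h with heq | hlt
  · exact Or.inl (Sum.inr.inj heq)
  · exact Or.inr hlt

lemma occurs_of_dpred (hO : O.IsOccurrenceNet) (σ : O.Run) {f e : E} (hd : O.dpred f e)
    {i : ℕ} (hi : (i : ℕ∞) < σ.len) (hsi : σ.seq i = e) : σ.occurs f := by
  obtain ⟨c, hpost, hpre⟩ := hd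
  have hen := σ.enabled_step i hi
  rw [hsi] at hen
  obtain ⟨k, _, hkl, hks⟩ := fired_step_of_marked hO σ hi.le (hen c hpre) hpost
  exact ⟨k, hkl, hks⟩

lemma occurs_down_dpred (hO : O.IsOccurrenceNet) (σ : O.Run) {e' e : E}
    (h : Relation.TransGen O.dpred e' e) : σ.occurs e → σ.occurs e' := by
  induction h with
  | single h => rintro ⟨i, hi, hs⟩; exact occurs_of_dpred hO σ h hi hs
  | tail _ hr ih => rintro ⟨i, hi, hs⟩; exact ih (occurs_of_dpred hO σ hr hi hs)

lemma occurs_down (hO : O.IsOccurrenceNet) (σ : O.Run) {e' e : E}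
    (h : O.elt e' e) (he : σ.occurs e) : σ.occurs e' :=
  occurs_down_dpred hO σ (transGen_dpred_of_elt h) he

lemma run_config (hO : O.IsOccurrenceNet) (σ : O.Run) :
    O.IsConfiguration {e | σ.occurs e} := by
  constructor
  · intro e he e' hlt
    exact occurs_down hO σ hlt he
  · rintro e he e' he' ⟨f, f', hne, ⟨c, hfc, hf'c⟩, hle1, hle2⟩
    have hf : σ.occurs f := by
      rcases nle_inr_inr hle1 with rfl | h
      · exact he
      · exact occurs_down hO σ h he
    have hf' : σ.occurs f' := by
      rcases nle_inr_inr hle2 with rfl | h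
      · exact he'
      · exact occurs_down hO σ h he'
    obtain ⟨k1, hk1, hs1⟩ := hf
    obtain ⟨k2, hk2, hs2⟩ := hf'
    have key : ∀ (a b : ℕ) (g g' : E), a < b → ((b:ℕ):ℕ∞) < σ.len → σ.seq a = g →
        σ.seq b = g' → O.pre g c → O.pre g' c → False := by
      intro a b g g' hab hb hsa hsb hg hg'
      have hen := σ.enabled_step b hb
      rw [hsb] at hen
      exact no_refill hO σ hb.le (hen c hg') hab (by rw [hsa]; exact hg)
    rcases lt_trichotomy k1 k2 with h | h | h
    · exact key k1 k2 f f' h hk2 hs1 hs2 hfc hf'c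
    · subst h; rw [hs1] at hs2; exact hne hs2
    · exact key k2 k1 f' f h hk1 hs2 hs1 hf'c hfc

/-- Extension lemma: if `e` is enabled "cofinally" along the run, then `e` does not
occur and `𝒞 ∪ {e}` is a configuration. -/
lemma extend (hO : O.IsOccurrenceNet) (σ : O.Run) (e : E)
    (hE0 : ∃ m : ℕ, (m : ℕ∞) ≤ σ.len ∧ O.enabled (σ.marks m) e)
    (hE : ∀ k : ℕ, (k : ℕ∞) < σ.len → ∃ m : ℕ, k < m ∧ (m : ℕ∞) ≤ σ.len ∧
      O.enabled (σ.marks m) e) :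
    ¬ σ.occurs e ∧ O.IsConfiguration (insert e {e' | σ.occurs e'}) := by
  obtain ⟨c0, hc0⟩ := hO.events_not_minimal e
  have hnot : ¬ σ.occurs e := by
    rintro ⟨k, hk, hks⟩
    obtain ⟨m, hkm, hml, hen⟩ := hE k hk
    exact no_refill hO σ hml (hen c0 hc0) hkm (by rw [hks]; exact hc0)
  obtain ⟨m0, hm0l, hen0⟩ := hE0
  have hstep1 : ∀ f, O.dpred f e → σ.occurs f := by
    rintro f ⟨c, hfc, hec⟩
    obtain ⟨k, _, hkl, hks⟩ := fired_step_of_marked hO σ hm0l (hen0 c hec) hfc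
    exact ⟨k, hkl, hks⟩
  have hdown : ∀ b, O.elt b e → σ.occurs b := by
    intro b hb
    obtain ⟨m', hrt, hr⟩ := Relation.TransGen.tail'_iff.mp (transGen_dpred_of_elt hb)
    have hm' : σ.occurs m' := hstep1 m' hr
    rcases rtg_cases hrt with rfl | htg
    · exact hm'
    · exact occurs_down_dpred hO σ htg hm'
  have hmemC : ∀ f z, z ∈ insert e {e' | σ.occurs e'} →
      O.nle (Sum.inr f) (Sum.inr z) → f = e ∨ σ.occurs f := by
    intro f z hz hle
    rcases nle_inr_inr hle with rfl | hlt
    · rcases hz with rfl | hz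
      · exact Or.inl rfl
      · exact Or.inr hz
    · rcases hz with rfl | hz
      · exact Or.inr (hdown f hlt)
      · exact Or.inr (occurs_down hO σ hlt hz)
  refine ⟨hnot, ?_, ?_⟩
  · rintro x hx b hb
    rcases hx with rfl | hx
    · exact Set.mem_insert_of_mem _ (hdown b hb)
    · exact Set.mem_insert_of_mem _ ((run_config hO σ).1 x hx b hb)
  · rintro x hx y hy ⟨f, f', hne, ⟨c, hfc, hf'c⟩, h1, h2⟩
    have hf := hmemC f x hx h1
    have hf' := hmemC f' y hy h2
    have key : ∀ g' : E, σ.occurs g' → O.pre g' c → O.pre e c → False := by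
      rintro g' ⟨k, hk, hks⟩ hg' hec
      obtain ⟨m, hkm, hml, hen⟩ := hE k hk
      exact no_refill hO σ hml (hen c hec) hkm (by rw [hks]; exact hg')
    rcases hf with rfl | hf <;> rcases hf' with rfl | hf'
    · exact hne rfl
    · exact key f' hf' hf'c hfc
    · exact key f hf hfc hf'c
    · exact (run_config hO σ).2 f hf f' hf'
        ⟨f, f', hne, ⟨c, hfc, hf'c⟩, Relation.ReflTransGen.refl, Relation.ReflTransGen.refl⟩

end Aux2

end PetriNet
/-- Let `O` be an occurrence net, `σ` a run of `O` (viewed as a safe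
Petri net with initial marking `C0`), and `𝒞` the set of events occurring in `σ`.  Then
`𝒞` is a configuration of `O`, and `σ` is fair if and only if `𝒞` is a maximal
configuration of `O`. -/
theorem stmt18 {C E : Type} (O : PetriNet C E) (hO : O.IsOccurrenceNet) (σ : O.Run) :
    O.IsConfiguration {e | σ.occurs e} ∧
      (σ.Fair ↔ O.MaximalConfiguration {e | σ.occurs e}) := by
  have hconf := PetriNet.run_config hO σ
  refine ⟨hconf, ?_, ?_⟩
  · -- fair → maximal
    intro hfair
    refine ⟨hconf, fun 𝒟 h𝒟 hsub => ?_⟩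
    by_contra hDne
    have hex : ∃ e0, e0 ∈ 𝒟 ∧ ¬ σ.occurs e0 := by
      by_contra h; push_neg at h
      exact hDne (Set.Subset.antisymm (fun x hx => h x hx) hsub)
    obtain ⟨e0, he0D, he0n⟩ := hex
    set S : Set E := {x | (x ∈ 𝒟 ∧ ¬ σ.occurs x) ∧ x ∈ O.cone e0} with hS
    have hSfin : S.Finite := (hO.finite_cones e0).subset (fun x hx => hx.2)
    have hSne : e0 ∈ hSfin.toFinset := by
      simp only [Set.Finite.mem_toFinset]
      exact ⟨⟨he0D, he0n⟩, PetriNet.mem_cone_self e0⟩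
    obtain ⟨e, heS, hemin⟩ := Finset.exists_min_image hSfin.toFinset
      (fun x => (hO.finite_cones x).toFinset.card) ⟨e0, hSne⟩
    simp only [Set.Finite.mem_toFinset] at heS
    have heD : e ∈ 𝒟 := heS.1.1
    have heN : ¬ σ.occurs e := heS.1.2
    have hee0 : e ∈ O.cone e0 := heS.2
    have hmin : ∀ b, b ∈ 𝒟 → ¬ σ.occurs b → ¬ O.elt b e := by
      intro b hb hbn hbe
      have hbe0 : b ∈ O.cone e0 := by
        rcases hee0 with rfl | hlt
        · exact Or.inr hbe
        · exact Or.inr (PetriNet.elt_trans hbe hlt)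
      have hle := hemin b (by simp only [Set.Finite.mem_toFinset]; exact ⟨⟨hb, hbn⟩, hbe0⟩)
      exact absurd hle (not_le.mpr (PetriNet.cone_card_lt hO hbe))
    -- producers of preconditions of e occur in σ
    have hprodC : ∀ c, O.pre e c → ∀ f, O.post f c → σ.occurs f := by
      intro c hc f hf
      have helt : O.elt f e := PetriNet.elt_of_dpred ⟨c, hf, hc⟩
      have hfD : f ∈ 𝒟 := h𝒟.1 e heD f helt
      by_contra hfn
      exact hmin f hfD hfn helt
    -- choose a step for each occurring event of the cone of e
    set F : Set E := {f | f ∈ O.cone e ∧ σ.occurs f} with hF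
    have hFfin : F.Finite := (hO.finite_cones e).subset (fun x hx => hx.1)
    classical
    set step : E → ℕ := fun f => if h : σ.occurs f then h.choose else 0 with hstepdef
    have hstep : ∀ f, σ.occurs f → ((step f : ℕ∞) < σ.len ∧ σ.seq (step f) = f) := by
      intro f hf
      simp only [hstepdef, dif_pos hf]
      exact hf.choose_spec
    set i0 : ℕ := hFfin.toFinset.sup (fun f => step f + 1) with hi0
    have hENAB : ∀ j : ℕ, i0 ≤ j → (j : ℕ∞) ≤ σ.len → O.enabled (σ.marks j) e := by
      intro j hij hjlen c hc
      have hcons : PetriNet.consCnt σ c j = 0 := by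
        apply Finset.card_eq_zero.mpr
        apply Finset.filter_eq_empty_iff.mpr
        intro k hk hkpre
        rw [Finset.mem_range] at hk
        have hkl : (k : ℕ∞) < σ.len := lt_of_lt_of_le (by exact_mod_cast hk) hjlen
        have hocc : σ.occurs (σ.seq k) := ⟨k, hkl, rfl⟩
        have hin𝒟 : σ.seq k ∈ 𝒟 := hsub hocc
        have hne' : σ.seq k ≠ e := fun h => heN (h ▸ hocc)
        exact h𝒟.2 (σ.seq k) hin𝒟 e heD
          ⟨σ.seq k, e, hne', ⟨c, hkpre, hc⟩, Relation.ReflTransGen.refl,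
            Relation.ReflTransGen.refl⟩
      have hM := PetriNet.marks_eq σ j hjlen c
      by_cases hpe : ∃ f, O.post f c
      · obtain ⟨f, hf⟩ := hpe
        have hocc := hprodC c hc f hf
        have hstf := hstep f hocc
        have hfF : f ∈ hFfin.toFinset := by
          simp only [Set.Finite.mem_toFinset]
          exact ⟨Or.inr (PetriNet.elt_of_dpred ⟨c, hf, hc⟩), hocc⟩
        have hlt : step f < j :=
          lt_of_lt_of_le (Nat.lt_succ_self _)
            (le_trans (Finset.le_sup (f := fun f => step f + 1) hfF) hij)
        have hprod : 1 ≤ PetriNet.prodCnt σ c j := by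
          apply Finset.card_pos.mpr
          refine ⟨step f, ?_⟩
          simp only [Finset.mem_filter, Finset.mem_range]
          exact ⟨hlt, by rw [hstf.2]; exact hf⟩
        have hM0 : O.M0 c = 0 := by
          rw [hO.init_minimal, if_neg]; push_neg; exact ⟨f, hf⟩
        omega
      · push_neg at hpe
        have hM0 : O.M0 c = 1 := by rw [hO.init_minimal, if_pos hpe]
        have hprod : PetriNet.prodCnt σ c j = 0 := by
          apply Finset.card_eq_zero.mpr
          apply Finset.filter_eq_empty_iff.mpr
          intro k _ hk; exact hpe _ hk
        omega
    rcases hfair with ⟨n, hlen, hnen⟩ | ⟨hlen, hfree⟩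
    · have hi0n : i0 ≤ n := by
        apply Finset.sup_le
        intro f hfF
        simp only [Set.Finite.mem_toFinset] at hfF
        have := (hstep f hfF.2).1
        rw [hlen] at this
        exact_mod_cast this
      exact hnen e (hENAB n hi0n (by rw [hlen]))
    · refine hfree ⟨e, i0, fun k hk => hENAB k hk (by rw [hlen]; exact le_top),
        fun k _ hke => heN ⟨k, by rw [hlen]; exact_mod_cast WithTop.coe_lt_top k, hke⟩⟩
  · -- maximal → fair
    intro hmax
    by_contra hnf
    rw [PetriNet.Run.Fair] at hnf
    push_neg at hnf
    obtain ⟨hfin, hinf⟩ := hnf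
    by_cases htop : σ.len = ⊤
    · obtain ⟨e, i0, hen, hnfire⟩ := hinf htop
      obtain ⟨hnot, hconf'⟩ := PetriNet.extend hO σ e
        ⟨i0, by rw [htop]; exact le_top, hen i0 le_rfl⟩
        (fun k _ => ⟨max (k+1) i0, lt_of_lt_of_le (Nat.lt_succ_self k) (le_max_left _ _),
          by rw [htop]; exact le_top, hen _ (le_max_right _ _)⟩)
      have := hmax.2 _ hconf' (Set.subset_insert _ _)
      exact hnot (show e ∈ {e | σ.occurs e} from this ▸ Set.mem_insert e _)
    · obtain ⟨n, hn⟩ := WithTop.ne_top_iff_exists.mp htop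
      obtain ⟨e, hen⟩ := hfin n hn.symm
      have hE : ∀ k : ℕ, (k : ℕ∞) < σ.len → ∃ m : ℕ, k < m ∧ (m : ℕ∞) ≤ σ.len ∧
          O.enabled (σ.marks m) e := by
        intro k hk
        rw [← hn] at hk
        exact ⟨n, Nat.cast_lt.mp hk, le_of_eq hn, hen⟩
      obtain ⟨hnot, hconf'⟩ := PetriNet.extend hO σ e ⟨n, le_of_eq hn, hen⟩ hE
      have := hmax.2 _ hconf' (Set.subset_insert _ _)
      exact hnot (show e ∈ {e | σ.occurs e} from this ▸ Set.mem_insert e _)
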